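/- In ℝ^5, let ∇^(1) = Conv{0, (1,1,1,0,0), (-3,1,1,0,0), (1,-3,1,0,0), (1,1,-3,0,0), (1,1,1,-4,0), (1,1,1,0,-4)} and ∇^(2) = Conv{0, (0,0,0,1,1), (-2,0,0,1,1), (0,-2,0,1,1), (0,0,-2,1,1), (0,0,0,-1,1), (0,0,0,1,-1)}. Then the Minkowski sum ∇^(1) + ∇^(2) equals Conv{0, (1,1,1,1,1), (-5,1,1,1,1), (1,-5,1,1,1), (1,1,-5,1,1), (1,1,1,-5,1), (1,1,1,1,-5)}. -/

import Mathlib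

open Pointwise

/-- `∇^(1)`, the Newton polytope of the quartic. -/
def Nabla1 : Set (Fin 5 → ℝ) :=
  convexHull ℝ
    {0, ![1, 1, 1, 0, 0], ![-3, 1, 1, 0, 0], ![1, -3, 1, 0, 0],
      ![1, 1, -3, 0, 0], ![1, 1, 1, -4, 0], ![1, 1, 1, 0, -4]}

/-- `∇^(2)`, the Newton polytope of the quadric. -/
def Nabla2 : Set (Fin 5 → ℝ) :=
  convexHull ℝ
    {0, ![0, 0, 0, 1, 1], ![-2, 0, 0, 1, 1], ![0, -2, 0, 1, 1],
      ![0, 0, -2, 1, 1], ![0, 0, 0, -1, 1], ![0, 0, 0, 1, -1]}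

/-- `∇`, the Newton polytope of anticanonical hypersurfaces in `ℙ^5`. -/
def Nabla : Set (Fin 5 → ℝ) :=
  convexHull ℝ
    {0, ![1, 1, 1, 1, 1], ![-5, 1, 1, 1, 1], ![1, -5, 1, 1, 1],
      ![1, 1, -5, 1, 1], ![1, 1, 1, -5, 1], ![1, 1, 1, 1, -5]}


private lemma vec6_five {α : Type*} (a b c d e f : α) : ![a,b,c,d,e,f] 5 = f := rfl
private lemma vec6_five' {α : Type*} (a b c d e f : α) (h : 5 < 6) :
    ![a,b,c,d,e,f] ⟨5, h⟩ = f := rfl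

lemma mem_Nabla (x : Fin 5 → ℝ) (h0 : x 0 ≤ 1) (h1 : x 1 ≤ 1) (h2 : x 2 ≤ 1)
    (h3 : x 3 ≤ 1) (h4 : x 4 ≤ 1) (hs : -1 ≤ x 0 + x 1 + x 2 + x 3 + x 4) :
    x ∈ Nabla := by
  set w : Fin 6 → ℝ :=
    ![(1 + (x 0 + x 1 + x 2 + x 3 + x 4)) / 6, (1 - x 0) / 6, (1 - x 1) / 6,
      (1 - x 2) / 6, (1 - x 3) / 6, (1 - x 4) / 6] with hw
  set z : Fin 6 → (Fin 5 → ℝ) :=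
    ![![1, 1, 1, 1, 1], ![-5, 1, 1, 1, 1], ![1, -5, 1, 1, 1],
      ![1, 1, -5, 1, 1], ![1, 1, 1, -5, 1], ![1, 1, 1, 1, -5]] with hz
  have hw0 : ∀ i ∈ Finset.univ, 0 ≤ w i := by
    intro i _
    fin_cases i <;> simp [hw, vec6_five, vec6_five'] <;> linarith
  have hwsum : ∑ i, w i = 1 := by
    simp [hw, Fin.sum_univ_six, vec6_five]; ring
  have key := Finset.centerMass_mem_convexHull (Finset.univ : Finset (Fin 6)) hw0
    (by rw [hwsum]; norm_num)
    (s := ({0, ![1, 1, 1, 1, 1], ![-5, 1, 1, 1, 1], ![1, -5, 1, 1, 1],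
      ![1, 1, -5, 1, 1], ![1, 1, 1, -5, 1], ![1, 1, 1, 1, -5]} : Set (Fin 5 → ℝ)))
    (z := z) (by intro i _; fin_cases i <;> simp [hz, vec6_five, vec6_five'])
  have hc : Finset.univ.centerMass w z = x := by
    rw [Finset.centerMass, hwsum]
    funext j
    simp only [inv_one, one_smul]
    rw [Fin.sum_univ_six]
    fin_cases j <;> simp [hw, hz, vec6_five, vec6_five'] <;> ring
  rw [hc] at key
  exact key

theorem minkowski_sum_decomposition : Nabla1 + Nabla2 = Nabla := by
  apply le_antisymm
  · rw [Nabla1, Nabla2, ← convexHull_add]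
    apply convexHull_min _ (convex_convexHull ℝ _)
    rintro x ⟨p, hp, q, hq, rfl⟩
    simp only [Set.mem_insert_iff, Set.mem_singleton_iff] at hp hq
    rcases hp with rfl|rfl|rfl|rfl|rfl|rfl|rfl <;>
      rcases hq with rfl|rfl|rfl|rfl|rfl|rfl|rfl <;>
      (apply mem_Nabla <;> simp <;> norm_num)
  · rw [Nabla]
    apply convexHull_min _ ((convex_convexHull ℝ _).add (convex_convexHull ℝ _))
    intro g hg
    simp only [Set.mem_insert_iff, Set.mem_singleton_iff] at hg
    have mem1 : ∀ p ∈ ({0, ![1, 1, 1, 0, 0], ![-3, 1, 1, 0, 0], ![1, -3, 1, 0, 0],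
        ![1, 1, -3, 0, 0], ![1, 1, 1, -4, 0], ![1, 1, 1, 0, -4]} : Set (Fin 5 → ℝ)),
        p ∈ Nabla1 := fun p hp => subset_convexHull ℝ _ hp
    have mem2 : ∀ p ∈ ({0, ![0, 0, 0, 1, 1], ![-2, 0, 0, 1, 1], ![0, -2, 0, 1, 1],
        ![0, 0, -2, 1, 1], ![0, 0, 0, -1, 1], ![0, 0, 0, 1, -1]} : Set (Fin 5 → ℝ)),
        p ∈ Nabla2 := fun p hp => subset_convexHull ℝ _ hp
    rcases hg with rfl|rfl|rfl|rfl|rfl|rfl|rfl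
    · exact ⟨0, mem1 _ (by simp), 0, mem2 _ (by simp), by simp⟩
    · exact ⟨![1,1,1,0,0], mem1 _ (by simp), ![0,0,0,1,1], mem2 _ (by simp),
        by funext j; fin_cases j <;> norm_num⟩
    · exact ⟨![-3,1,1,0,0], mem1 _ (by simp), ![-2,0,0,1,1], mem2 _ (by simp),
        by funext j; fin_cases j <;> norm_num⟩
    · exact ⟨![1,-3,1,0,0], mem1 _ (by simp), ![0,-2,0,1,1], mem2 _ (by simp),
        by funext j; fin_cases j <;> norm_num⟩
    · exact ⟨![1,1,-3,0,0], mem1 _ (by simp), ![0,0,-2,1,1], mem2 _ (by simp),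
        by funext j; fin_cases j <;> norm_num⟩
    · exact ⟨![1,1,1,-4,0], mem1 _ (by simp), ![0,0,0,-1,1], mem2 _ (by simp),
        by funext j; fin_cases j <;> norm_num⟩
    · exact ⟨![1,1,1,0,-4], mem1 _ (by simp), ![0,0,0,1,-1], mem2 _ (by simp),
        by funext j; fin_cases j <;> norm_num⟩
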